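/- Let $N, D$ be natural numbers with $1 \le D < N$, let $L^+, L^- > 0$, let $k^+ > 0$ and $k^- < 0$ with $\frac{|k^-|}{k^+} \ne \frac{D}{L^+} \cdot \frac{L^-}{N-D}$. Set $L_j = L^+$ and $k_j = k^+$ for $1 \le j \le D$, and $L_j = L^-$ and $k_j = k^-$ for $D+1 \le j \le N$. Then for every tuple of continuous functions $f_j : [0,L_j] \to \mathbb{R}$ there exists a unique tuple $(\psi_1,\dots,\psi_N)$ of twice continuously differentiable functions $\psi_j : [0,L_j] \to \mathbb{R}$ satisfying $-k_j \psi_j'' = f_j$ on $[0,L_j]$ for all $j$, $\psi_j(0) = 0$ for all $j$, $\psi_1(L_1) = \cdots = \psi_N(L_N)$, and $\sum_{j=1}^{N} k_j \psi_j'(L_j) = 0$. -/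

import Mathlib

open Set

section Aux
noncomputable def starII (h : ℝ → ℝ) (x : ℝ) : ℝ := ∫ t in (0:ℝ)..x, h t

lemma starII_zero (h : ℝ → ℝ) : starII h 0 = 0 := intervalIntegral.integral_same

lemma starII_hasDerivAt {h : ℝ → ℝ} (hc : Continuous h) (x : ℝ) :
    HasDerivAt (starII h) (h x) x := (hc.integral_hasStrictDerivAt 0 x).hasDerivAt

lemma starII_differentiable {h : ℝ → ℝ} (hc : Continuous h) :
    Differentiable ℝ (starII h) := fun x => (starII_hasDerivAt hc x).differentiableAt

lemma starII_continuous {h : ℝ → ℝ} (hc : Continuous h) : Continuous (starII h) :=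
  (starII_differentiable hc).continuous

noncomputable def starSol (c : ℝ) (h : ℝ → ℝ) : ℝ → ℝ := fun x => c * x + starII (starII h) x

lemma starSol_zero (c : ℝ) (h : ℝ → ℝ) : starSol c h 0 = 0 := by
  simp [starSol, starII_zero]

lemma starSol_hasDerivAt {h : ℝ → ℝ} (c : ℝ) (hc : Continuous h) (x : ℝ) :
    HasDerivAt (starSol c h) (c + starII h x) x := by
  have h1 : HasDerivAt (fun x : ℝ => c * x) c x := by
    simpa using (hasDerivAt_id x).const_mul c
  exact h1.add (starII_hasDerivAt (starII_continuous hc) x)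

lemma starSol_differentiable {h : ℝ → ℝ} (c : ℝ) (hc : Continuous h) :
    Differentiable ℝ (starSol c h) := fun x => (starSol_hasDerivAt c hc x).differentiableAt

lemma starSol_deriv {h : ℝ → ℝ} (c : ℝ) (hc : Continuous h) :
    deriv (starSol c h) = fun x => c + starII h x :=
  funext fun x => (starSol_hasDerivAt c hc x).deriv

lemma starSol_deriv2 {h : ℝ → ℝ} (c : ℝ) (hc : Continuous h) :
    deriv (deriv (starSol c h)) = h := by
  rw [starSol_deriv c hc]
  funext x
  exact ((starII_hasDerivAt hc x).const_add c).deriv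

lemma starSol_contDiff {h : ℝ → ℝ} (c : ℝ) (hc : Continuous h) :
    ContDiff ℝ 2 (starSol c h) := by
  rw [show (2 : WithTop ℕ∞) = 1 + 1 from rfl, contDiff_succ_iff_deriv]
  refine ⟨starSol_differentiable c hc, by simp, ?_⟩
  rw [starSol_deriv c hc, contDiff_one_iff_deriv]
  constructor
  · exact (starII_differentiable hc).const_add c
  · have : deriv (fun x => c + starII h x) = h :=
      funext fun x => ((starII_hasDerivAt hc x).const_add c).deriv
    rw [this]; exact hc

lemma star_derivWithin_eq {g : ℝ → ℝ} {b x : ℝ} (hb : 0 < b) (hg : Differentiable ℝ g)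
    (hx : x ∈ Icc (0:ℝ) b) : derivWithin g (Icc 0 b) x = deriv g x :=
  (hg x).derivWithin ((uniqueDiffOn_Icc hb) x hx)

lemma star_iter2_eq_derivWithin {g : ℝ → ℝ} {b x : ℝ} (hb : 0 < b) (hx : x ∈ Icc (0:ℝ) b) :
    iteratedDerivWithin 2 g (Icc 0 b) x
      = derivWithin (derivWithin g (Icc 0 b)) (Icc 0 b) x := by
  have hu := uniqueDiffOn_Icc hb
  rw [show (2:ℕ) = 1 + 1 from rfl, iteratedDerivWithin_succ]
  exact derivWithin_congr (fun y hy => congrFun iteratedDerivWithin_one y)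
    (congrFun iteratedDerivWithin_one x)

lemma star_iter2_eq {g : ℝ → ℝ} {b x : ℝ} (hb : 0 < b) (h1 : Differentiable ℝ g)
    (h2 : Differentiable ℝ (deriv g)) (hx : x ∈ Icc (0:ℝ) b) :
    iteratedDerivWithin 2 g (Icc 0 b) x = deriv (deriv g) x := by
  rw [star_iter2_eq_derivWithin hb hx]
  have h : derivWithin (derivWithin g (Icc 0 b)) (Icc 0 b) x
      = derivWithin (deriv g) (Icc 0 b) x :=
    derivWithin_congr (fun y hy => star_derivWithin_eq hb h1 hy)
      (star_derivWithin_eq hb h1 hx)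
  rw [h, star_derivWithin_eq hb h2 hx]

lemma star_edge_unique {u v : ℝ → ℝ} {b : ℝ} (hb : 0 < b)
    (hu : ContDiffOn ℝ 2 u (Icc (0:ℝ) b)) (hv : ContDiffOn ℝ 2 v (Icc (0:ℝ) b))
    (h2 : ∀ x ∈ Icc (0:ℝ) b,
      derivWithin (derivWithin u (Icc 0 b)) (Icc 0 b) x
        = derivWithin (derivWithin v (Icc 0 b)) (Icc 0 b) x)
    (h0 : u 0 = v 0) :
    ∃ c : ℝ, (∀ x ∈ Icc (0:ℝ) b, u x = v x + c * x) ∧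
      (∀ x ∈ Icc (0:ℝ) b, derivWithin u (Icc 0 b) x = derivWithin v (Icc 0 b) x + c) := by
  have hud := uniqueDiffOn_Icc hb
  set s : Set ℝ := Icc (0:ℝ) b with hs
  set p : ℝ → ℝ := derivWithin u s with hp
  set q : ℝ → ℝ := derivWithin v s with hq
  have hpc : ContDiffOn ℝ 1 p s := hu.derivWithin hud (by norm_num)
  have hqc : ContDiffOn ℝ 1 q s := hv.derivWithin hud (by norm_num)
  have hpd : DifferentiableOn ℝ p s := hpc.differentiableOn one_ne_zero
  have hqd : DifferentiableOn ℝ q s := hqc.differentiableOn one_ne_zero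
  have hud' : DifferentiableOn ℝ u s := hu.differentiableOn (by norm_num)
  have hvd : DifferentiableOn ℝ v s := hv.differentiableOn (by norm_num)
  have h0s : (0:ℝ) ∈ s := ⟨le_refl 0, hb.le⟩
  set c : ℝ := p 0 - q 0 with hc
  have hconst : ∀ x ∈ s, p x - q x = c := by
    intro x hx
    have := constant_of_derivWithin_zero (f := fun x => p x - q x) (a := 0) (b := b)
      (hpd.sub hqd) (fun y hy => ?_) x hx
    · simpa using this
    · have hy' : y ∈ s := mem_Icc_of_Ico hy
      rw [derivWithin_fun_sub (hpd y hy') (hqd y hy'), h2 y hy', sub_self]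
  have hvc : DifferentiableOn ℝ (fun y : ℝ => v y + c * y) s :=
    hvd.add ((differentiable_id.const_mul c).differentiableOn)
  have hg : ∀ x ∈ s, HasDerivWithinAt (fun y : ℝ => v y + c * y) (q x + c) s x := by
    intro x hx
    have h1 : HasDerivWithinAt (fun y : ℝ => c * y) c s x := by
      simpa using ((hasDerivAt_id x).const_mul c).hasDerivWithinAt
    exact (hvd x hx).hasDerivWithinAt.add h1
  refine ⟨c, fun x hx => ?_, fun x hx => by have := hconst x hx; rw [hp, hq] at this; linarith⟩
  refine eq_of_derivWithin_eq (g := fun y : ℝ => v y + c * y) hud' hvc (fun y hy => ?_)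
    (by simpa using h0) x hx
  have hy' : y ∈ s := mem_Icc_of_Ico hy
  rw [(hg y hy').derivWithin (hud y hy')]
  have := hconst y hy'
  simp only [hp, hq] at this ⊢
  linarith
end Aux



/-- The predicate saying that `ψ = (ψ_1, …, ψ_N)` is a classical solution of the
star-network problem with `N` edges, edge `j` of length `L j` and conductivity `k j`,
source terms `f j`, Dirichlet conditions at the external vertices `x = 0`,
and continuity plus Kirchhoff conditions at the internal vertex (`x = L j` on edge `j`). -/
def IsStarSolutionVar (N : ℕ) (L : ℕ → ℝ) (k : ℕ → ℝ) (f : ℕ → ℝ → ℝ)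
    (ψ : ℕ → ℝ → ℝ) : Prop :=
  (∀ j ∈ Finset.Icc 1 N, ContDiffOn ℝ 2 (ψ j) (Set.Icc 0 (L j))) ∧
  (∀ j ∈ Finset.Icc 1 N, ∀ x ∈ Set.Icc 0 (L j),
      -(k j * iteratedDerivWithin 2 (ψ j) (Set.Icc 0 (L j)) x) = f j x) ∧
  (∀ j ∈ Finset.Icc 1 N, ψ j 0 = 0) ∧
  (∀ j ∈ Finset.Icc 1 N, ψ j (L j) = ψ 1 (L 1)) ∧
  (∑ j ∈ Finset.Icc 1 N, k j * derivWithin (ψ j) (Set.Icc 0 (L j)) (L j) = 0)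

lemma star_exists (N : ℕ) (hN : 1 ≤ N) (L k : ℕ → ℝ)
    (hLpos : ∀ j ∈ Finset.Icc 1 N, 0 < L j)
    (hkne : ∀ j ∈ Finset.Icc 1 N, k j ≠ 0)
    (hS : ∑ j ∈ Finset.Icc 1 N, k j / L j ≠ 0)
    (f : ℕ → ℝ → ℝ) (hf : ∀ j ∈ Finset.Icc 1 N, ContinuousOn (f j) (Set.Icc 0 (L j))) :
    ∃ ψ : ℕ → ℝ → ℝ, IsStarSolutionVar N L k f ψ := by
  classical
  set F : ℕ → ℝ → ℝ := fun j x => f j (max 0 (min x (L j))) with hF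
  have hFcont : ∀ j ∈ Finset.Icc 1 N, Continuous (F j) := by
    intro j hj
    refine (hf j hj).comp_continuous
      (Continuous.max continuous_const (continuous_id.min continuous_const)) (fun x => ?_)
    exact ⟨le_max_left _ _, max_le (hLpos j hj).le (min_le_right _ _)⟩
  have hFeq : ∀ j ∈ Finset.Icc 1 N, ∀ x ∈ Set.Icc (0:ℝ) (L j), F j x = f j x := by
    intro j hj x hx
    simp only [hF]
    rw [min_eq_left hx.2, max_eq_right hx.1]
  set g : ℕ → ℝ → ℝ := fun j x => -(F j x) / k j with hg
  have hgcont : ∀ j ∈ Finset.Icc 1 N, Continuous (g j) :=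
    fun j hj => ((hFcont j hj).neg).div_const _
  set W : ℕ → ℝ := fun j => starII (starII (g j)) (L j) with hW
  set gl : ℕ → ℝ := fun j => starII (g j) (L j) with hgl
  set S : ℝ := ∑ j ∈ Finset.Icc 1 N, k j / L j with hSdef
  set T : ℝ := ∑ j ∈ Finset.Icc 1 N, (k j * W j / L j - k j * gl j) with hT
  set V : ℝ := T / S with hV
  set c : ℕ → ℝ := fun j => (V - W j) / L j with hc
  have hder : ∀ j ∈ Finset.Icc 1 N,
      derivWithin (starSol (c j) (g j)) (Set.Icc 0 (L j)) (L j) = c j + gl j := by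
    intro j hj
    rw [star_derivWithin_eq (hLpos j hj) (starSol_differentiable _ (hgcont j hj))
      (right_mem_Icc.mpr (hLpos j hj).le), starSol_deriv _ (hgcont j hj)]
  have hval : ∀ j ∈ Finset.Icc 1 N, starSol (c j) (g j) (L j) = V := by
    intro j hj
    have hLj := (hLpos j hj).ne'
    simp only [starSol, hc, ← hW]
    field_simp
    simp only [hW]; ring
  have h1mem : 1 ∈ Finset.Icc 1 N := Finset.mem_Icc.mpr ⟨le_refl 1, hN⟩
  refine ⟨fun j => starSol (c j) (g j), ?_, ?_, ?_, ?_, ?_⟩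
  · exact fun j hj => (starSol_contDiff _ (hgcont j hj)).contDiffOn
  · intro j hj x hx
    have hd2 : Differentiable ℝ (deriv (starSol (c j) (g j))) := by
      rw [starSol_deriv _ (hgcont j hj)]
      exact (starII_differentiable (hgcont j hj)).const_add _
    rw [star_iter2_eq (hLpos j hj) (starSol_differentiable _ (hgcont j hj)) hd2 hx,
      starSol_deriv2 _ (hgcont j hj)]
    simp only [hg]
    rw [← hFeq j hj x hx]
    have hk := hkne j hj
    field_simp
  · exact fun j hj => starSol_zero _ _
  · exact fun j hj => (hval j hj).trans (hval 1 h1mem).symm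
  · calc ∑ j ∈ Finset.Icc 1 N, k j * derivWithin (starSol (c j) (g j)) (Set.Icc 0 (L j)) (L j)
        = ∑ j ∈ Finset.Icc 1 N, ((k j / L j) * V - (k j * W j / L j - k j * gl j)) := by
          refine Finset.sum_congr rfl (fun j hj => ?_)
          rw [hder j hj]
          have hLj := (hLpos j hj).ne'
          simp only [hc]
          field_simp
          try ring
      _ = S * V - T := by rw [Finset.sum_sub_distrib, ← Finset.sum_mul, ← hSdef, ← hT]
      _ = 0 := by rw [hV]; field_simp; simp

lemma star_unique (N : ℕ) (hN : 1 ≤ N) (L k : ℕ → ℝ)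
    (hLpos : ∀ j ∈ Finset.Icc 1 N, 0 < L j)
    (hkne : ∀ j ∈ Finset.Icc 1 N, k j ≠ 0)
    (hS : ∑ j ∈ Finset.Icc 1 N, k j / L j ≠ 0)
    (f : ℕ → ℝ → ℝ) {φ ψ : ℕ → ℝ → ℝ}
    (hφ : IsStarSolutionVar N L k f φ) (hψ : IsStarSolutionVar N L k f ψ) :
    ∀ j ∈ Finset.Icc 1 N, ∀ x ∈ Set.Icc (0:ℝ) (L j), φ j x = ψ j x := by
  obtain ⟨hφ1, hφ2, hφ3, hφ4, hφ5⟩ := hφ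
  obtain ⟨hψ1, hψ2, hψ3, hψ4, hψ5⟩ := hψ
  have h1mem : 1 ∈ Finset.Icc 1 N := Finset.mem_Icc.mpr ⟨le_refl 1, hN⟩
  have key : ∀ j : ℕ, ∃ c : ℝ, j ∈ Finset.Icc 1 N →
      (∀ x ∈ Set.Icc (0:ℝ) (L j), φ j x = ψ j x + c * x) ∧
      (∀ x ∈ Set.Icc (0:ℝ) (L j),
        derivWithin (φ j) (Set.Icc 0 (L j)) x = derivWithin (ψ j) (Set.Icc 0 (L j)) x + c) := by
    intro j
    by_cases hj : j ∈ Finset.Icc 1 N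
    · have h2 : ∀ x ∈ Set.Icc (0:ℝ) (L j),
          derivWithin (derivWithin (φ j) (Set.Icc 0 (L j))) (Set.Icc 0 (L j)) x
            = derivWithin (derivWithin (ψ j) (Set.Icc 0 (L j))) (Set.Icc 0 (L j)) x := by
        intro x hx
        rw [← star_iter2_eq_derivWithin (hLpos j hj) hx,
          ← star_iter2_eq_derivWithin (hLpos j hj) hx]
        have e1 := hφ2 j hj x hx
        have e2 := hψ2 j hj x hx
        have hk := hkne j hj
        apply mul_left_cancel₀ hk
        linarith [e1.trans e2.symm]
      obtain ⟨c, hc⟩ := star_edge_unique (hLpos j hj) (hφ1 j hj) (hψ1 j hj) h2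
        ((hφ3 j hj).trans (hψ3 j hj).symm)
      exact ⟨c, fun _ => hc⟩
    · exact ⟨0, fun h => absurd h hj⟩
  choose C hC using key
  set U : ℝ := φ 1 (L 1) - ψ 1 (L 1) with hU
  have hCL : ∀ j ∈ Finset.Icc 1 N, C j * L j = U := by
    intro j hj
    have hLmem : L j ∈ Set.Icc (0:ℝ) (L j) := right_mem_Icc.mpr (hLpos j hj).le
    have h := (hC j hj).1 (L j) hLmem
    rw [hφ4 j hj, hψ4 j hj] at h
    rw [hU]; linarith
  have hCval : ∀ j ∈ Finset.Icc 1 N, C j = U / L j := by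
    intro j hj
    rw [eq_div_iff (hLpos j hj).ne']
    exact hCL j hj
  have hsum : ∑ j ∈ Finset.Icc 1 N, k j * derivWithin (φ j) (Set.Icc 0 (L j)) (L j)
      = ∑ j ∈ Finset.Icc 1 N,
        (k j * derivWithin (ψ j) (Set.Icc 0 (L j)) (L j) + (k j / L j) * U) := by
    refine Finset.sum_congr rfl (fun j hj => ?_)
    have hLmem : L j ∈ Set.Icc (0:ℝ) (L j) := right_mem_Icc.mpr (hLpos j hj).le
    rw [(hC j hj).2 (L j) hLmem, hCval j hj]
    have hLj := (hLpos j hj).ne'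
    field_simp
    try ring
  rw [hφ5, Finset.sum_add_distrib, hψ5, ← Finset.sum_mul, zero_add] at hsum
  have hU0 : U = 0 := by
    rcases mul_eq_zero.mp hsum.symm with h | h
    · exact absurd h hS
    · exact h
  intro j hj x hx
  have h := (hC j hj).1 x hx
  rw [hCval j hj, hU0] at h
  simpa using h

/-- Well-posedness for a two-phase star network with two possibly different edge lengths
and Dirichlet boundary conditions (Corollary 2.2): `D` dielectric edges of length `L⁺`
and conductivity `k⁺ > 0`, `N - D` metamaterial edges of length `L⁻` and conductivity
`k⁻ < 0`, provided `|k⁻|/k⁺ ≠ (D/L⁺)·(L⁻/(N-D))`. -/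
theorem stmt_3 (N D : ℕ) (hD : 1 ≤ D) (hDN : D < N)
    (Lp Lm : ℝ) (hLp : 0 < Lp) (hLm : 0 < Lm)
    (kp km : ℝ) (hkp : 0 < kp) (hkm : km < 0)
    (hres : |km| / kp ≠ ((D : ℝ) / Lp) * (Lm / ((N : ℝ) - (D : ℝ))))
    (L : ℕ → ℝ) (k : ℕ → ℝ)
    (hL1 : ∀ j, 1 ≤ j → j ≤ D → L j = Lp)
    (hL2 : ∀ j, D < j → j ≤ N → L j = Lm)
    (hk1 : ∀ j, 1 ≤ j → j ≤ D → k j = kp)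
    (hk2 : ∀ j, D < j → j ≤ N → k j = km)
    (f : ℕ → ℝ → ℝ) (hf : ∀ j ∈ Finset.Icc 1 N, ContinuousOn (f j) (Set.Icc 0 (L j))) :
    ∃ ψ : ℕ → ℝ → ℝ, IsStarSolutionVar N L k f ψ ∧
      ∀ φ : ℕ → ℝ → ℝ, IsStarSolutionVar N L k f φ →
        ∀ j ∈ Finset.Icc 1 N, ∀ x ∈ Set.Icc (0 : ℝ) (L j), φ j x = ψ j x := by
  have hN : 1 ≤ N := hD.trans hDN.le
  have hLpos : ∀ j ∈ Finset.Icc 1 N, 0 < L j := by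
    intro j hj
    rw [Finset.mem_Icc] at hj
    by_cases h : j ≤ D
    · rw [hL1 j hj.1 h]; exact hLp
    · push_neg at h; rw [hL2 j h hj.2]; exact hLm
  have hkne : ∀ j ∈ Finset.Icc 1 N, k j ≠ 0 := by
    intro j hj
    rw [Finset.mem_Icc] at hj
    by_cases h : j ≤ D
    · rw [hk1 j hj.1 h]; exact hkp.ne'
    · push_neg at h; rw [hk2 j h hj.2]; exact hkm.ne
  have hS : ∑ j ∈ Finset.Icc 1 N, k j / L j ≠ 0 := by
    have hset : Finset.Icc 1 N = Finset.Ioc 0 N := by ext x; simp; omega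
    have e1 : ∑ j ∈ Finset.Ioc 0 D, k j / L j = (D:ℝ) * (kp / Lp) := by
      have hc : ∀ j ∈ Finset.Ioc 0 D, k j / L j = kp / Lp := by
        intro j hj
        rw [Finset.mem_Ioc] at hj
        rw [hk1 j hj.1 hj.2, hL1 j hj.1 hj.2]
      rw [Finset.sum_congr rfl hc, Finset.sum_const, Nat.card_Ioc, nsmul_eq_mul]
      simp
    have e2 : ∑ j ∈ Finset.Ioc D N, k j / L j = ((N:ℝ) - (D:ℝ)) * (km / Lm) := by
      have hc : ∀ j ∈ Finset.Ioc D N, k j / L j = km / Lm := by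
        intro j hj
        rw [Finset.mem_Ioc] at hj
        rw [hk2 j hj.1 hj.2, hL2 j hj.1 hj.2]
      rw [Finset.sum_congr rfl hc, Finset.sum_const, Nat.card_Ioc, nsmul_eq_mul,
        Nat.cast_sub hDN.le]
    have hsum : ∑ j ∈ Finset.Icc 1 N, k j / L j
        = (D:ℝ) * (kp / Lp) + ((N:ℝ) - (D:ℝ)) * (km / Lm) := by
      rw [hset, ← Finset.sum_Ioc_consecutive _ (Nat.zero_le D) hDN.le, e1, e2]
    rw [hsum]
    intro h
    apply hres
    have habs : |km| = -km := abs_of_neg hkm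
    have hd : (0:ℝ) < (D:ℝ) := by exact_mod_cast hD
    have hnd : (0:ℝ) < (N:ℝ) - (D:ℝ) := sub_pos.mpr (by exact_mod_cast hDN)
    rw [habs]
    field_simp at h ⊢
    linarith
  obtain ⟨ψ, hψ⟩ := star_exists N hN L k hLpos hkne hS f hf
  exact ⟨ψ, hψ, fun φ hφ => star_unique N hN L k hLpos hkne hS f hφ hψ⟩
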